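/- Let C be a coalgebra over a commutative ring k which is finitely generated and projective as a k-module, with dual basis {cᵢ} ⊂ C, {fᵢ} ⊂ C* (so Σᵢ fᵢ(c) cᵢ = c for all c). Then C* is a right C-comodule with coaction f ↦ Σᵢ f * fᵢ ⊗ cᵢ (where * is the convolution product), and for any right C-comodule Σ the k-module Q = { q : Σ → C* | Σ q(x₍₀₎)(c) x₍₁₎ = Σ c₍₁₎ q(x)(c₍₂₎) } coincides with Hom^C(Σ, C*), the set of right C-colinear maps Σ → C*. -/
import Mathlib


open TensorProduct

noncomputable section

/-- A right comodule structure on `M` over a `k`-coalgebra `C`. -/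
structure RightComodule (k C M : Type*) [CommRing k] [AddCommGroup C] [Module k C]
    [Coalgebra k C] [AddCommGroup M] [Module k M] where
  ρ : M →ₗ[k] M ⊗[k] C
  coassoc : ∀ m : M,
    (TensorProduct.assoc k M C C) (ρ.rTensor C (ρ m)) =
      (Coalgebra.comul (R := k) (A := C)).lTensor M (ρ m)
  counit_comp : ∀ m : M,
    (TensorProduct.rid k M) ((Coalgebra.counit (R := k) (A := C)).lTensor M (ρ m)) = m

variable {k C M N : Type*} [CommRing k] [AddCommGroup C] [Module k C] [Coalgebra k C]

/-- Convolution product on the dual of a coalgebra: `(conv f g) c = ∑ f c₍₁₎ * g c₍₂₎`. -/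
def conv (f g : C →ₗ[k] k) : C →ₗ[k] k :=
  (TensorProduct.lid k k).toLinearMap ∘ₗ TensorProduct.map f g ∘ₗ Coalgebra.comul

/-- The right action of the dual of `C` on a right `C`-comodule: `x · f = ∑ x₍₀₎ * f x₍₁₎`. -/
def ract [AddCommGroup M] [Module k M] (σ : RightComodule k C M) (m : M)
    (f : C →ₗ[k] k) : M :=
  (TensorProduct.rid k M) (f.lTensor M (σ.ρ m))

/-- A map of right `C`-comodules. -/
def IsColinear [AddCommGroup M] [Module k M] [AddCommGroup N] [Module k N]
    (σM : RightComodule k C M) (σN : RightComodule k C N) (φ : M →ₗ[k] N) : Prop :=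
  φ.rTensor C ∘ₗ σM.ρ = σN.ρ ∘ₗ φ

/-- The `k`-module `Q` associated to a right `C`-comodule `M`:
maps `q : M → C*` with `∑ q x₍₀₎ c • x₍₁₎ = ∑ c₍₁₎ • q x c₍₂₎` for all `x, c`. -/
def QSet [AddCommGroup M] [Module k M] (σ : RightComodule k C M) :
    Set (M →ₗ[k] C →ₗ[k] k) :=
  { q | ∀ (x : M) (c : C),
      (TensorProduct.lid k C) (((LinearMap.applyₗ c).comp q).rTensor C (σ.ρ x)) =
      (TensorProduct.rid k C) ((q x).lTensor C (Coalgebra.comul c)) }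

/-- The `*C`-type convolution product on the dual of `C`:
`(f * g) c = ∑ g c₍₁₎ * f c₍₂₎`, i.e. `(f * g)(c) = g(∑ c₍₁₎ f(c₍₂₎))`. -/
def starMul (f g : C →ₗ[k] k) : C →ₗ[k] k := conv g f

-- bilinearity
lemma conv_add_left (f f' g : C →ₗ[k] k) : conv (f + f') g = conv f g + conv f' g := by
  unfold conv; rw [TensorProduct.map_add_left]; ext c; simp

lemma conv_add_right (f g g' : C →ₗ[k] k) : conv f (g + g') = conv f g + conv f g' := by
  unfold conv; rw [TensorProduct.map_add_right]; ext c; simp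

lemma conv_smul_left (a : k) (f g : C →ₗ[k] k) : conv (a • f) g = a • conv f g := by
  unfold conv; rw [TensorProduct.map_smul_left]; ext c; simp

lemma conv_smul_right (a : k) (f g : C →ₗ[k] k) : conv f (a • g) = a • conv f g := by
  unfold conv; rw [TensorProduct.map_smul_right]; ext c; simp

lemma conv_counit_left (f : C →ₗ[k] k) : conv Coalgebra.counit f = f := by
  ext c
  have h : ((TensorProduct.lid k k).toLinearMap ∘ₗ
      TensorProduct.map (Coalgebra.counit (R := k) (A := C)) f) =
      f ∘ₗ (TensorProduct.lid k C).toLinearMap ∘ₗ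
        (Coalgebra.counit (R := k) (A := C)).rTensor C := by
    apply TensorProduct.ext'
    intro a b
    simp [smul_eq_mul, mul_comm]
  have : conv (Coalgebra.counit) f c =
      f ((TensorProduct.lid k C) ((Coalgebra.counit (R := k) (A := C)).rTensor C
        (Coalgebra.comul c))) := by
    simpa [conv] using congrFun (congrArg (DFunLike.coe) h) (Coalgebra.comul (R := k) c)
  rw [this, Coalgebra.rTensor_counit_comul]
  simp

lemma conv_counit_right (f : C →ₗ[k] k) : conv f Coalgebra.counit = f := by
  ext c
  have h : ((TensorProduct.lid k k).toLinearMap ∘ₗ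
      TensorProduct.map f (Coalgebra.counit (R := k) (A := C))) =
      f ∘ₗ (TensorProduct.rid k C).toLinearMap ∘ₗ
        (Coalgebra.counit (R := k) (A := C)).lTensor C := by
    apply TensorProduct.ext'
    intro a b
    simp [smul_eq_mul, mul_comm]
  have : conv f (Coalgebra.counit) c =
      f ((TensorProduct.rid k C) ((Coalgebra.counit (R := k) (A := C)).lTensor C
        (Coalgebra.comul c))) := by
    simpa [conv] using congrFun (congrArg (DFunLike.coe) h) (Coalgebra.comul (R := k) c)
  rw [this, Coalgebra.lTensor_counit_comul]
  simp

/-- evaluation pairing -/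
def pair {A B : Type*} [AddCommGroup A] [Module k A] [AddCommGroup B] [Module k B]
    (f : A →ₗ[k] k) (g : B →ₗ[k] k) : A ⊗[k] B →ₗ[k] k :=
  (TensorProduct.lid k k).toLinearMap ∘ₗ TensorProduct.map f g

omit [Coalgebra k C] in
lemma pair_tmul {A B : Type*} [AddCommGroup A] [Module k A] [AddCommGroup B] [Module k B]
    (f : A →ₗ[k] k) (g : B →ₗ[k] k) (a : A) (b : B) :
    pair f g (a ⊗ₜ[k] b) = f a * g b := by
  simp [pair, smul_eq_mul]

lemma conv_assoc (f g h : C →ₗ[k] k) : conv (conv f g) h = conv f (conv g h) := by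
  ext c
  have h1 : pair (conv f g) h =
      pair (pair f g) h ∘ₗ (Coalgebra.comul (R := k) (A := C)).rTensor C := by
    apply TensorProduct.ext'
    intro a b
    simp only [LinearMap.comp_apply, LinearMap.rTensor_tmul, pair_tmul]
    simp only [conv, LinearMap.comp_apply]
    induction (Coalgebra.comul (R := k) a) using TensorProduct.induction_on with
    | zero => simp
    | tmul x y => simp [pair_tmul, smul_eq_mul]
    | add x y hx hy => simp_all [add_mul]
  have h2 : pair f (conv g h) =
      pair f (pair g h) ∘ₗ (Coalgebra.comul (R := k) (A := C)).lTensor C := by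
    apply TensorProduct.ext'
    intro a b
    simp only [LinearMap.comp_apply, LinearMap.lTensor_tmul, pair_tmul]
    simp only [conv, LinearMap.comp_apply]
    induction (Coalgebra.comul (R := k) b) using TensorProduct.induction_on with
    | zero => simp
    | tmul x y => simp [pair_tmul, smul_eq_mul]
    | add x y hx hy => simp_all [mul_add]
  have h3 : pair f (pair g h) ∘ₗ (TensorProduct.assoc k C C C).toLinearMap =
      pair (pair f g) h := by
    apply TensorProduct.ext_threefold
    intro a b c
    simp [pair_tmul, mul_assoc]
  have hc : conv (conv f g) h c = pair (conv f g) h (Coalgebra.comul c) := rfl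
  have hc2 : conv f (conv g h) c = pair f (conv g h) (Coalgebra.comul c) := rfl
  rw [hc, hc2, h1, h2]
  simp only [LinearMap.comp_apply]
  rw [← Coalgebra.coassoc_apply, ← h3]
  simp


section Helpers

lemma starMul_add_left (f f' g : C →ₗ[k] k) : starMul (f + f') g = starMul f g + starMul f' g := by
  simp [starMul, conv_add_right]

lemma starMul_smul_left (a : k) (f g : C →ₗ[k] k) : starMul (a • f) g = a • starMul f g := by
  simp [starMul, conv_smul_right]

lemma starMul_add_right (f g g' : C →ₗ[k] k) : starMul f (g + g') = starMul f g + starMul f g' := by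
  simp [starMul, conv_add_left]

lemma starMul_smul_right (a : k) (f g : C →ₗ[k] k) : starMul f (a • g) = a • starMul f g := by
  simp [starMul, conv_smul_left]

/-- trace lemma: any tensor is recovered from its contractions with a dual basis. -/
lemma trace_lemma {V M : Type*} [AddCommGroup V] [Module k V] [AddCommGroup M] [Module k M]
    {ι : Type*} [Fintype ι] (cbV : ι → V) (fbV : ι → (V →ₗ[k] k))
    (hdbV : ∀ v : V, ∑ i, fbV i v • cbV i = v) (t : M ⊗[k] V) :
    ∑ i, (TensorProduct.rid k M) ((fbV i).lTensor M t) ⊗ₜ[k] cbV i = t := by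
  induction t using TensorProduct.induction_on with
  | zero => simp
  | tmul m v =>
    calc ∑ i, (TensorProduct.rid k M) ((fbV i).lTensor M (m ⊗ₜ[k] v)) ⊗ₜ[k] cbV i
        = ∑ i, m ⊗ₜ[k] (fbV i v • cbV i) := by
          refine Finset.sum_congr rfl fun i _ => ?_
          simp only [LinearMap.lTensor_tmul, TensorProduct.rid_tmul, TensorProduct.smul_tmul]
      _ = m ⊗ₜ[k] v := by rw [← TensorProduct.tmul_sum, hdbV]
  | add x y hx hy =>
    simp only [map_add, TensorProduct.add_tmul, Finset.sum_add_distrib, hx, hy]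

lemma sep_lemma {V M : Type*} [AddCommGroup V] [Module k V] [AddCommGroup M] [Module k M]
    {ι : Type*} [Fintype ι] (cbV : ι → V) (fbV : ι → (V →ₗ[k] k))
    (hdbV : ∀ v : V, ∑ i, fbV i v • cbV i = v) (t₁ t₂ : M ⊗[k] V)
    (h : ∀ i, (TensorProduct.rid k M) ((fbV i).lTensor M t₁) =
      (TensorProduct.rid k M) ((fbV i).lTensor M t₂)) : t₁ = t₂ := by
  rw [← trace_lemma cbV fbV hdbV t₁, ← trace_lemma cbV fbV hdbV t₂]
  exact Finset.sum_congr rfl fun i _ => by rw [h i]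

end Helpers


section Main2

/-- starMul as a bilinear map -/
def starB : (C →ₗ[k] k) →ₗ[k] (C →ₗ[k] k) →ₗ[k] (C →ₗ[k] k) :=
  LinearMap.mk₂ k starMul starMul_add_left (fun a f g => starMul_smul_left a f g)
    (fun f g g' => starMul_add_right f g g') (fun a f g => starMul_smul_right a f g)

@[simp] lemma starB_apply (f g : C →ₗ[k] k) : starB f g = starMul f g := rfl

lemma contract (ι : Type*) [Fintype ι] {M V : Type*} [AddCommGroup M] [Module k M]
    [AddCommGroup V] [Module k V]
    (a : ι → M) (d : ι → V) (g : V →ₗ[k] k) :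
    (TensorProduct.rid k M) (g.lTensor M (∑ i, a i ⊗ₜ[k] d i)) = ∑ i, g (d i) • a i := by
  simp [map_sum]

lemma equiv_map_sum {M N : Type*} [AddCommMonoid M] [Module k M] [AddCommMonoid N]
    [Module k N] (e : M ≃ₗ[k] N) {ι : Type*} (t : Finset ι) (f : ι → M) :
    e (∑ i ∈ t, f i) = ∑ i ∈ t, e (f i) :=
  map_sum (e.toLinearMap) f t

variable (n : ℕ) (cb : Fin n → C) (fb : Fin n → (C →ₗ[k] k))

/-- dual version of the dual basis property -/
lemma sumA (hdb : ∀ c : C, ∑ i, fb i c • cb i = c) (g : C →ₗ[k] k) :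
    ∑ i, g (cb i) • fb i = g := by
  ext c
  have h := congrArg g (hdb c)
  simp only [map_sum, map_smul, smul_eq_mul] at h
  simp only [LinearMap.sum_apply, LinearMap.smul_apply, smul_eq_mul]
  rw [← h]
  exact Finset.sum_congr rfl fun i _ => mul_comm _ _

/-- the coaction on the dual -/
def rho : (C →ₗ[k] k) →ₗ[k] (C →ₗ[k] k) ⊗[k] C where
  toFun f := ∑ i, starMul f (fb i) ⊗ₜ[k] cb i
  map_add' f f' := by
    simp only [starMul_add_left, TensorProduct.add_tmul, Finset.sum_add_distrib]
  map_smul' a f := by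
    simp only [starMul_smul_left, TensorProduct.smul_tmul', RingHom.id_apply,
      Finset.smul_sum]

@[simp] lemma rho_apply (f : C →ₗ[k] k) :
    rho n cb fb f = ∑ i, starMul f (fb i) ⊗ₜ[k] cb i := rfl

lemma chi (hdb : ∀ c : C, ∑ i, fb i c • cb i = c) (f g : C →ₗ[k] k) :
    (TensorProduct.rid k (C →ₗ[k] k)) (g.lTensor _ (rho n cb fb f)) = starMul f g := by
  rw [rho_apply, contract]
  calc ∑ i, g (cb i) • starMul f (fb i)
      = starB f (∑ i, g (cb i) • fb i) := by simp [map_sum]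
    _ = starMul f g := by rw [sumA n cb fb hdb g, starB_apply]

lemma rho_unique (hdb : ∀ c : C, ∑ i, fb i c • cb i = c)
    (t : (C →ₗ[k] k) ⊗[k] C) (f : C →ₗ[k] k)
    (h : ∀ g : C →ₗ[k] k, (TensorProduct.rid k (C →ₗ[k] k)) (g.lTensor _ t) = starMul f g) :
    t = rho n cb fb f := by
  rw [← trace_lemma cb fb hdb t, rho_apply]
  exact Finset.sum_congr rfl fun i _ => by rw [h (fb i)]

/-- dual basis for `C ⊗ C` -/
lemma hdb2 (hdb : ∀ c : C, ∑ i, fb i c • cb i = c) (t : C ⊗[k] C) :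
    ∑ p : Fin n × Fin n, pair (fb p.1) (fb p.2) t • (cb p.1 ⊗ₜ[k] cb p.2) = t := by
  induction t using TensorProduct.induction_on with
  | zero => simp
  | tmul a b =>
    calc ∑ p : Fin n × Fin n, pair (fb p.1) (fb p.2) (a ⊗ₜ[k] b) • (cb p.1 ⊗ₜ[k] cb p.2)
        = ∑ i, ∑ j, (fb i a • cb i) ⊗ₜ[k] (fb j b • cb j) := by
          rw [Fintype.sum_prod_type]
          refine Finset.sum_congr rfl fun i _ => Finset.sum_congr rfl fun j _ => ?_
          rw [pair_tmul]
          simp [TensorProduct.smul_tmul', smul_smul, mul_comm]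
      _ = ∑ i, (fb i a • cb i) ⊗ₜ[k] (∑ j, fb j b • cb j) := by
          simp [TensorProduct.tmul_sum]
      _ = (∑ i, fb i a • cb i) ⊗ₜ[k] (∑ j, fb j b • cb j) := by
          rw [TensorProduct.sum_tmul]
      _ = a ⊗ₜ[k] b := by rw [hdb a, hdb b]
  | add x y hx hy =>
    simp only [map_add, add_smul, Finset.sum_add_distrib, hx, hy]

lemma B1 (t : (C →ₗ[k] k) ⊗[k] C) (g : C →ₗ[k] k) (c : C) :
    ((TensorProduct.rid k (C →ₗ[k] k)) (g.lTensor _ t)) c =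
    g ((TensorProduct.lid k C) ((LinearMap.applyₗ c).rTensor C t)) := by
  induction t using TensorProduct.induction_on with
  | zero => simp
  | tmul p d =>
    simp [smul_eq_mul, mul_comm]
  | add x y hx hy =>
    simp only [map_add, LinearMap.add_apply, hx, hy]

lemma B2 (f g : C →ₗ[k] k) (c : C) :
    (starMul f g) c = g ((TensorProduct.rid k C) (f.lTensor C (Coalgebra.comul c))) := by
  have key : ∀ t : C ⊗[k] C, pair g f t = g ((TensorProduct.rid k C) (f.lTensor C t)) := by
    intro t
    induction t using TensorProduct.induction_on with
    | zero => simp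
    | tmul a b => simp [pair_tmul, smul_eq_mul, mul_comm]
    | add x y hx hy => simp only [map_add, hx, hy]
  exact key (Coalgebra.comul c)

lemma sepC (hdb : ∀ c : C, ∑ i, fb i c • cb i = c) (a b : C)
    (h : ∀ i, fb i a = fb i b) : a = b := by
  rw [← hdb a, ← hdb b]
  exact Finset.sum_congr rfl fun i _ => by rw [h i]

end Main2

theorem stmt_19 {P : Type*} [AddCommGroup P] [Module k P] (σ : RightComodule k C P)
    -- `C` is finitely generated projective over `k`, with dual basis `{cᵢ}, {fᵢ}`
    (n : ℕ) (cb : Fin n → C) (fb : Fin n → (C →ₗ[k] k))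
    (hdb : ∀ c : C, ∑ i, fb i c • cb i = c) :
    -- `C*` is a right `C`-comodule with coaction `f ↦ ∑ᵢ (f * fᵢ) ⊗ cᵢ` …
    ∃ ρstar : RightComodule k C (C →ₗ[k] k),
      (∀ f : C →ₗ[k] k, ρstar.ρ f = ∑ i, (starMul f (fb i)) ⊗ₜ[k] cb i) ∧
      -- … independently of the chosen dual basis …
      (∀ (m : ℕ) (cb' : Fin m → C) (fb' : Fin m → (C →ₗ[k] k)),
        (∀ c : C, ∑ j, fb' j c • cb' j = c) →
        ∀ f : C →ₗ[k] k, ρstar.ρ f = ∑ j, (starMul f (fb' j)) ⊗ₜ[k] cb' j) ∧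
      -- … and `Q` coincides with the right `C`-colinear maps `P → C*`
      QSet σ = {q : P →ₗ[k] C →ₗ[k] k | IsColinear σ ρstar q} := by
  classical
  have hchi := chi n cb fb hdb
  -- coassociativity of the coaction on the dual
  have hcoassoc : ∀ f : C →ₗ[k] k,
      (TensorProduct.assoc k (C →ₗ[k] k) C C)
        ((rho n cb fb).rTensor C (rho n cb fb f)) =
      (Coalgebra.comul (R := k) (A := C)).lTensor (C →ₗ[k] k) (rho n cb fb f) := by
    intro f
    apply sep_lemma (fun p : Fin n × Fin n => cb p.1 ⊗ₜ[k] cb p.2)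
      (fun p : Fin n × Fin n => pair (fb p.1) (fb p.2)) (hdb2 n cb fb hdb)
    rintro ⟨i0, j0⟩
    set g : C →ₗ[k] k := fb i0 with hg
    set h : C →ₗ[k] k := fb j0 with hh
    have ht1 : (TensorProduct.assoc k (C →ₗ[k] k) C C)
        ((rho n cb fb).rTensor C (rho n cb fb f)) =
        ∑ p : Fin n × Fin n,
          starMul (starMul f (fb p.1)) (fb p.2) ⊗ₜ[k] (cb p.2 ⊗ₜ[k] cb p.1) := by
      rw [Fintype.sum_prod_type]
      rw [rho_apply, map_sum, equiv_map_sum (TensorProduct.assoc k (C →ₗ[k] k) C C)]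
      refine Finset.sum_congr rfl fun i _ => ?_
      rw [LinearMap.rTensor_tmul, rho_apply, TensorProduct.sum_tmul,
        equiv_map_sum (TensorProduct.assoc k (C →ₗ[k] k) C C)]
      exact Finset.sum_congr rfl fun j _ => by rw [TensorProduct.assoc_tmul]
    have ht2 : (Coalgebra.comul (R := k) (A := C)).lTensor (C →ₗ[k] k) (rho n cb fb f) =
        ∑ i, starMul f (fb i) ⊗ₜ[k] (Coalgebra.comul (R := k) (cb i)) := by
      rw [rho_apply, map_sum]
      exact Finset.sum_congr rfl fun i _ => by rw [LinearMap.lTensor_tmul]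
    rw [ht1, ht2, contract, contract]
    -- left side
    have lhs_eq : ∑ p : Fin n × Fin n,
        pair g h (cb p.2 ⊗ₜ[k] cb p.1) • starMul (starMul f (fb p.1)) (fb p.2) =
        starMul (starMul f h) g := by
      have step1 : ∑ p : Fin n × Fin n,
          pair g h (cb p.2 ⊗ₜ[k] cb p.1) • starMul (starMul f (fb p.1)) (fb p.2) =
          ∑ i, h (cb i) • (starB (starB f (fb i)) (∑ j, g (cb j) • fb j)) := by
        rw [Fintype.sum_prod_type]
        refine Finset.sum_congr rfl fun i _ => ?_
        rw [map_sum, Finset.smul_sum]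
        refine Finset.sum_congr rfl fun j _ => ?_
        rw [pair_tmul, map_smul, smul_smul, mul_comm]
        rfl
      rw [step1, sumA n cb fb hdb g]
      have step2 : ∑ i, h (cb i) • (starB (starB f (fb i)) g) =
          ((starB.flip g).comp (starB f)) (∑ i, h (cb i) • fb i) := by
        rw [map_sum]
        exact Finset.sum_congr rfl fun i _ => by rw [map_smul]; rfl
      rw [step2, sumA n cb fb hdb h]
      rfl
    -- right side
    have rhs_eq : ∑ i, pair g h (Coalgebra.comul (R := k) (cb i)) • starMul f (fb i) =
        starMul (starMul f h) g := by
      have hpc : ∀ c : C, pair g h (Coalgebra.comul (R := k) c) = conv g h c := fun c => rfl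
      have step1 : ∑ i, pair g h (Coalgebra.comul (R := k) (cb i)) • starMul f (fb i) =
          starB f (∑ i, conv g h (cb i) • fb i) := by
        rw [map_sum]
        exact Finset.sum_congr rfl fun i _ => by rw [hpc, map_smul, starB_apply]
      rw [step1, sumA n cb fb hdb (conv g h)]
      show starMul f (conv g h) = starMul (starMul f h) g
      show conv (conv g h) f = conv g (conv h f)
      rw [conv_assoc]
    rw [lhs_eq, rhs_eq]
  -- counitality of the coaction on the dual
  have hcounit : ∀ f : C →ₗ[k] k,
      (TensorProduct.rid k (C →ₗ[k] k))
        ((Coalgebra.counit (R := k) (A := C)).lTensor (C →ₗ[k] k) (rho n cb fb f)) = f := by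
    intro f
    rw [rho_apply, contract]
    have : ∑ i, Coalgebra.counit (R := k) (cb i) • starMul f (fb i) =
        starB f (∑ i, Coalgebra.counit (R := k) (cb i) • fb i) := by
      rw [map_sum]
      exact Finset.sum_congr rfl fun i _ => by rw [map_smul, starB_apply]
    rw [this, sumA n cb fb hdb Coalgebra.counit]
    show conv Coalgebra.counit f = f
    exact conv_counit_left f
  refine ⟨⟨rho n cb fb, hcoassoc, hcounit⟩, fun f => rfl, ?_, ?_⟩
  · -- independence of the dual basis
    intro m cb' fb' hdb' f
    have hh' : (rho n cb fb) f = ∑ j, starMul f (fb' j) ⊗ₜ[k] cb' j := by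
      conv_lhs => rw [← trace_lemma cb' fb' hdb' (rho n cb fb f)]
      exact Finset.sum_congr rfl fun j _ => by rw [hchi f (fb' j)]
    exact hh'
  · -- QSet = colinear maps
    ext q
    simp only [QSet, Set.mem_setOf_eq, IsColinear]
    constructor
    · intro hq
      apply LinearMap.ext
      intro x
      simp only [LinearMap.comp_apply]
      show q.rTensor C (σ.ρ x) = rho n cb fb (q x)
      apply rho_unique n cb fb hdb
      intro g
      ext c
      rw [B1]
      rw [show (LinearMap.applyₗ c).rTensor C (q.rTensor C (σ.ρ x)) =
          ((LinearMap.applyₗ c).comp q).rTensor C (σ.ρ x) from ?_]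
      · rw [hq x c, ← B2]
      rw [LinearMap.rTensor_comp]
      rfl
    · intro hcol x c
      apply sepC n cb fb hdb
      intro i
      rw [← B2 (q x) (fb i) c, ← hchi (q x) (fb i)]
      have hx : q.rTensor C (σ.ρ x) = rho n cb fb (q x) := by
        have := LinearMap.congr_fun hcol x
        simpa using this
      rw [show ((LinearMap.applyₗ c).comp q).rTensor C (σ.ρ x) =
          (LinearMap.applyₗ c).rTensor C (q.rTensor C (σ.ρ x)) from ?_]
      · rw [hx, ← B1]
      rw [LinearMap.rTensor_comp]
      rfl
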